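/- For every real number β > 1, we have r_β(x) = 0 for Lebesgue-almost every x ∈ [0,1); equivalently, the set { x ∈ [0,1) : r_β(x) > 0 } has Lebesgue measure zero. -/

import Mathlib

open Set Filter MeasureTheory
open scoped ENNReal

/-- The β-transformation `x ↦ βx mod 1`. -/
noncomputable def Tbeta (β : ℝ) (x : ℝ) : ℝ := β * x - ⌊β * x⌋

/-- The asymptotic recurrence exponent
`r_β(x) = sup {r ∈ [0,∞] : |T_β^n x - x| < β^{-rn} for infinitely many n}`. -/
noncomputable def rBeta (β : ℝ) (x : ℝ) : ℝ≥0∞ :=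
  ⨆ r ∈ {r : ℝ | 0 ≤ r ∧
      ∃ᶠ n : ℕ in atTop, |(Tbeta β)^[n] x - x| < β ^ (-(r * (n : ℝ)))},
    ENNReal.ofReal r

/-- The uniform recurrence exponent
`r̂_β(x) = sup {r̂ ∈ [0,∞] : ∀ N ≫ 1, ∃ 1 ≤ n ≤ N, |T_β^n x - x| < β^{-r̂N}}`. -/
noncomputable def rHatBeta (β : ℝ) (x : ℝ) : ℝ≥0∞ :=
  ⨆ r ∈ {r : ℝ | 0 ≤ r ∧
      ∀ᶠ N : ℕ in atTop, ∃ n : ℕ, 1 ≤ n ∧ n ≤ N ∧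
        |(Tbeta β)^[n] x - x| < β ^ (-(r * (N : ℝ)))},
    ENNReal.ofReal r

namespace BetaAux

lemma Tbeta_mem_Ico (β x : ℝ) : Tbeta β x ∈ Set.Ico (0:ℝ) 1 := by
  have h1 := Int.fract_nonneg (β * x)
  have h2 := Int.fract_lt_one (β * x)
  rw [Int.fract] at h1 h2
  exact ⟨by simpa [Tbeta] using h1, by simpa [Tbeta] using h2⟩

lemma iter_mem_Ico {β x : ℝ} (hx : x ∈ Set.Ico (0:ℝ) 1) (n : ℕ) :
    (Tbeta β)^[n] x ∈ Set.Ico (0:ℝ) 1 := by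
  induction n generalizing x with
  | zero => simpa using hx
  | succ n ih =>
    rw [Function.iterate_succ_apply]
    exact ih (Tbeta_mem_Ico β x)

/-- cylinder sets -/
def cyl (β : ℝ) : List ℤ → Set ℝ
  | [] => Set.Ico 0 1
  | d :: w => {x | x ∈ Set.Ico (0:ℝ) 1 ∧ ⌊β * x⌋ = d ∧ Tbeta β x ∈ cyl β w}

/-- branch constant -/
def cylc (β : ℝ) : List ℤ → ℝ
  | [] => 0
  | d :: w => β ^ w.length * d + cylc β w

lemma cyl_subset_Ico (β : ℝ) (w : List ℤ) : cyl β w ⊆ Set.Ico (0:ℝ) 1 := by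
  cases w with
  | nil => exact fun x hx => hx
  | cons d w => exact fun x hx => hx.1

lemma iterate_eq_of_mem_cyl {β : ℝ} (w : List ℤ) {x : ℝ} (hx : x ∈ cyl β w) :
    (Tbeta β)^[w.length] x = β ^ w.length * x - cylc β w := by
  induction w generalizing x with
  | nil => simp [cylc]
  | cons d w ih =>
    obtain ⟨h1, hd, hT⟩ := hx
    rw [List.length_cons, Function.iterate_succ_apply, ih hT]
    simp only [Tbeta, hd, cylc]
    ring

noncomputable def word (β : ℝ) : ℕ → ℝ → List ℤ
  | 0, _ => []
  | n+1, x => ⌊β * x⌋ :: word β n (Tbeta β x)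

lemma word_length (β : ℝ) (n : ℕ) (x : ℝ) : (word β n x).length = n := by
  induction n generalizing x with
  | zero => rfl
  | succ n ih => simp [word, ih]

lemma mem_cyl_word {β x : ℝ} (hx : x ∈ Set.Ico (0:ℝ) 1) (n : ℕ) :
    x ∈ cyl β (word β n x) := by
  induction n generalizing x with
  | zero => exact hx
  | succ n ih => exact ⟨hx, rfl, ih (Tbeta_mem_Ico β x)⟩

lemma word_eq_of_mem_cyl {β x : ℝ} {w : List ℤ} (hx : x ∈ cyl β w) :
    word β w.length x = w := by
  induction w generalizing x with
  | nil => rfl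
  | cons d w ih =>
    obtain ⟨h1, hd, hT⟩ := hx
    simp [word, hd, ih hT]

lemma cyl_disjoint {β : ℝ} {w₁ w₂ : List ℤ} (h : w₁.length = w₂.length)
    (hne : w₁ ≠ w₂) : Disjoint (cyl β w₁) (cyl β w₂) := by
  rw [Set.disjoint_left]
  intro x hx1 hx2
  exact hne ((word_eq_of_mem_cyl hx1).symm.trans (by rw [h]; exact word_eq_of_mem_cyl hx2))

lemma cyl_ordconn {β : ℝ} (hβ : 1 < β) (w : List ℤ) {x y z : ℝ}
    (hx : x ∈ cyl β w) (hy : y ∈ cyl β w) (hxz : x ≤ z) (hzy : z ≤ y) :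
    z ∈ cyl β w := by
  induction w generalizing x y z with
  | nil =>
    exact ⟨le_trans hx.1 hxz, lt_of_le_of_lt hzy hy.2⟩
  | cons d w ih =>
    obtain ⟨hx1, hxd, hxT⟩ := hx
    obtain ⟨hy1, hyd, hyT⟩ := hy
    have hβ0 : (0:ℝ) ≤ β := by linarith
    have h1 : β * x ≤ β * z := mul_le_mul_of_nonneg_left hxz hβ0
    have h2 : β * z ≤ β * y := mul_le_mul_of_nonneg_left hzy hβ0
    have hzd : ⌊β * z⌋ = d := by
      refine le_antisymm ?_ ?_
      · rw [← hyd]; exact Int.floor_le_floor h2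
      · rw [← hxd]; exact Int.floor_le_floor h1
    refine ⟨⟨le_trans hx1.1 hxz, lt_of_le_of_lt hzy hy1.2⟩, hzd, ?_⟩
    have hTx : Tbeta β x = β * x - d := by rw [Tbeta, hxd]
    have hTy : Tbeta β y = β * y - d := by rw [Tbeta, hyd]
    have hTz : Tbeta β z = β * z - d := by rw [Tbeta, hzd]
    exact ih hxT hyT (by rw [hTx, hTz]; linarith) (by rw [hTz, hTy]; linarith)

lemma mem_cyl_append {β : ℝ} (w : List ℤ) (d : ℤ) (x : ℝ) :
    x ∈ cyl β (w ++ [d]) ↔ x ∈ cyl β w ∧ ⌊β * (Tbeta β)^[w.length] x⌋ = d := by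
  induction w generalizing x with
  | nil =>
    simp only [List.nil_append, List.length_nil, Function.iterate_zero, id_eq]
    constructor
    · rintro ⟨h1, hd, _⟩; exact ⟨h1, hd⟩
    · rintro ⟨h1, hd⟩; exact ⟨h1, hd, Tbeta_mem_Ico β x⟩
  | cons a w ih =>
    simp only [List.cons_append]
    constructor
    · rintro ⟨h1, ha, hT⟩
      obtain ⟨hTw, hTd⟩ := (ih _).mp hT
      refine ⟨⟨h1, ha, hTw⟩, ?_⟩
      rw [List.length_cons, Function.iterate_succ_apply]
      exact hTd
    · rintro ⟨⟨h1, ha, hTw⟩, hd⟩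
      refine ⟨h1, ha, (ih _).mpr ⟨hTw, ?_⟩⟩
      rw [List.length_cons, Function.iterate_succ_apply] at hd
      exact hd


lemma cyl_exists_min {β : ℝ} (hβ : 1 < β) (w : List ℤ) (h : (cyl β w).Nonempty) :
    ∃ x ∈ cyl β w, (Tbeta β)^[w.length] x = 0 ∧ ∀ y ∈ cyl β w, x ≤ y := by
  revert h
  have hβ0 : (0:ℝ) < β := by linarith
  induction w with
  | nil =>
    exact fun _ => ⟨0, ⟨le_refl 0, one_pos⟩, by simp, fun y hy => hy.1⟩
  | cons d w ih =>
    intro h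
    obtain ⟨x₀, hx₀⟩ := h
    obtain ⟨h01, hd0, hT0⟩ := hx₀
    have hwne : (cyl β w).Nonempty := ⟨_, hT0⟩
    obtain ⟨z, hz, hz0, hzmin⟩ := ih hwne
    have hd_nonneg : (0:ℤ) ≤ d := by
      rw [← hd0]
      exact Int.floor_nonneg.mpr (mul_nonneg hβ0.le h01.1)
    have hz01 : z ∈ Set.Ico (0:ℝ) 1 := cyl_subset_Ico β w hz
    set x := (z + d) / β with hxdef
    have hβx : β * x = z + d := by rw [hxdef, mul_div_cancel₀ _ hβ0.ne']
    have hx0 : (0:ℝ) ≤ x := by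
      apply div_nonneg _ (le_of_lt hβ0)
      have : (0:ℝ) ≤ (d:ℝ) := Int.cast_nonneg_iff.mpr hd_nonneg
      linarith [hz01.1]
    have hzle : z ≤ Tbeta β x₀ := hzmin _ hT0
    have hTx₀ : Tbeta β x₀ = β * x₀ - d := by rw [Tbeta, hd0]
    have hx_le_x₀ : x ≤ x₀ := by
      rw [hxdef, div_le_iff₀ hβ0]
      rw [hTx₀] at hzle
      linarith
    have hx1 : x < 1 := lt_of_le_of_lt hx_le_x₀ h01.2
    have hfl : ⌊β * x⌋ = d := by
      rw [hβx, show z + (d:ℝ) = z + ((d:ℤ):ℝ) from by norm_num, Int.floor_add_intCast,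
        Int.floor_eq_zero_iff.mpr hz01, zero_add]
    have hTx : Tbeta β x = z := by rw [Tbeta, hfl, hβx]; ring
    refine ⟨x, ⟨⟨hx0, hx1⟩, hfl, by rw [hTx]; exact hz⟩, ?_, ?_⟩
    · rw [List.length_cons, Function.iterate_succ_apply, hTx, hz0]
    · rintro y ⟨hy1, hyd, hyT⟩
      have : z ≤ β * y - d := by
        have := hzmin _ hyT
        rw [Tbeta, hyd] at this
        exact this
      rw [hxdef, div_le_iff₀ hβ0]
      linarith

lemma Ioo_subset_cyl {β : ℝ} (hβ : 1 < β) (w : List ℤ) (h : (cyl β w).Nonempty) :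
    Set.Ioo (sInf (cyl β w)) (sSup (cyl β w)) ⊆ cyl β w := by
  intro z hz
  obtain ⟨x, hx, hxz⟩ := exists_lt_of_csInf_lt h hz.1
  obtain ⟨y, hy, hzy⟩ := exists_lt_of_lt_csSup h hz.2
  exact cyl_ordconn hβ w hx hy hxz.le hzy.le

lemma bddAbove_cyl (β : ℝ) (w : List ℤ) : BddAbove (cyl β w) :=
  (bddAbove_Ico (a := (0:ℝ)) (b := 1)).mono (cyl_subset_Ico β w)

lemma bddBelow_cyl (β : ℝ) (w : List ℤ) : BddBelow (cyl β w) :=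
  (bddBelow_Ico (a := (0:ℝ)) (b := 1)).mono (cyl_subset_Ico β w)

lemma diam_nonneg {β : ℝ} (w : List ℤ) (h : (cyl β w).Nonempty) :
    0 ≤ sSup (cyl β w) - sInf (cyl β w) :=
  sub_nonneg.mpr (csInf_le_csSup h (bddBelow_cyl β w) (bddAbove_cyl β w))

lemma iterate_le_diam {β : ℝ} (hβ : 1 < β) (w : List ℤ) (h : (cyl β w).Nonempty)
    {x : ℝ} (hx : x ∈ cyl β w) :
    (Tbeta β)^[w.length] x ≤ β ^ w.length * (sSup (cyl β w) - sInf (cyl β w)) := by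
  obtain ⟨x₀, hx₀, hx₀0, _⟩ := cyl_exists_min hβ w h
  have e1 := iterate_eq_of_mem_cyl w hx
  have e2 := iterate_eq_of_mem_cyl w hx₀
  rw [hx₀0] at e2
  have hc : cylc β w = β ^ w.length * x₀ := by linarith
  rw [e1, hc]
  have h1 : x ≤ sSup (cyl β w) := le_csSup (bddAbove_cyl β w) hx
  have h2 : sInf (cyl β w) ≤ x₀ := csInf_le (bddBelow_cyl β w) hx₀
  have hb : (0:ℝ) ≤ β ^ w.length := by positivity
  nlinarith

/-- The counting lemma: realized words of length `n` number at most `(β^(n+1)-1)/(β-1)`. -/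
lemma counting {β : ℝ} (hβ : 1 < β) (n : ℕ) :
    ∃ F : Finset (List ℤ),
      (∀ w, w ∈ F ↔ (w.length = n ∧ (cyl β w).Nonempty)) ∧
      (F.card : ℝ) ≤ (β ^ (n+1) - 1) / (β - 1) := by
  classical
  have hβ1 : (0:ℝ) < β - 1 := by linarith
  induction n with
  | zero =>
    refine ⟨{[]}, ?_, ?_⟩
    · intro w
      simp only [Finset.mem_singleton]
      constructor
      · rintro rfl
        exact ⟨rfl, ⟨0, le_refl 0, one_pos⟩⟩
      · rintro ⟨hlen, _⟩
        exact List.length_eq_zero_iff.mp hlen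
    · simp only [Finset.card_singleton, Nat.cast_one]
      rw [le_div_iff₀ hβ1, pow_one]
      linarith
  | succ n ih =>
    obtain ⟨F, hF, hFcard⟩ := ih
    set L : List ℤ → ℝ := fun w => β ^ (n+1) * (sSup (cyl β w) - sInf (cyl β w)) with hL
    set G : Finset (List ℤ) :=
      (F.biUnion fun w => (Finset.Icc (0:ℤ) ⌊L w⌋).image fun d => w ++ [d]).filter
        (fun w' => (cyl β w').Nonempty) with hG
    have hGmem : ∀ w', w' ∈ G ↔ (w'.length = n + 1 ∧ (cyl β w').Nonempty) := by
      intro w'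
      rw [hG, Finset.mem_filter]
      constructor
      · rintro ⟨hw', hne⟩
        refine ⟨?_, hne⟩
        rw [Finset.mem_biUnion] at hw'
        obtain ⟨w, hwF, hw'im⟩ := hw'
        rw [Finset.mem_image] at hw'im
        obtain ⟨d, _, rfl⟩ := hw'im
        rw [List.length_append, ((hF w).mp hwF).1]
        rfl
      · rintro ⟨hlen, hne⟩
        obtain ⟨x, hx⟩ := hne
        refine ⟨?_, ⟨x, hx⟩⟩
        have hw'ne : w' ≠ [] := by
          intro hc; rw [hc] at hlen; simp at hlen
        obtain ⟨w, d, rfl⟩ : ∃ w d, w' = w ++ [d] :=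
          ⟨w'.dropLast, w'.getLast hw'ne, (List.dropLast_append_getLast hw'ne).symm⟩
        rw [mem_cyl_append] at hx
        obtain ⟨hxw, hxd⟩ := hx
        have hwlen : w.length = n := by
          rw [List.length_append] at hlen
          simpa using hlen
        have hwF : w ∈ F := (hF w).mpr ⟨hwlen, ⟨x, hxw⟩⟩
        rw [Finset.mem_biUnion]
        refine ⟨w, hwF, ?_⟩
        rw [Finset.mem_image]
        refine ⟨d, ?_, rfl⟩
        rw [Finset.mem_Icc]
        have hT0 : (Tbeta β)^[w.length] x ∈ Set.Ico (0:ℝ) 1 :=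
          iter_mem_Ico (cyl_subset_Ico β w hxw) w.length
        constructor
        · rw [← hxd]
          exact Int.floor_nonneg.mpr (mul_nonneg (by linarith) hT0.1)
        · rw [← hxd]
          apply Int.floor_le_floor
          rw [hL]
          have := iterate_le_diam hβ w ⟨x, hxw⟩ hxw
          rw [hwlen] at this
          calc β * (Tbeta β)^[w.length] x ≤ β * (β ^ n * (sSup (cyl β w) - sInf (cyl β w))) := by
                apply mul_le_mul_of_nonneg_left _ (by linarith)
                rw [← hwlen] at this ⊢
                exact this
            _ = β ^ (n+1) * (sSup (cyl β w) - sInf (cyl β w)) := by ring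
    -- the length sum bound
    have hsum : ∑ w ∈ F, (sSup (cyl β w) - sInf (cyl β w)) ≤ 1 := by
      have hdisj : (F : Set (List ℤ)).PairwiseDisjoint
          (fun w => Set.Ioo (sInf (cyl β w)) (sSup (cyl β w))) := by
        intro w₁ h₁ w₂ h₂ hne
        have hl₁ := ((hF w₁).mp h₁).1
        have hl₂ := ((hF w₂).mp h₂).1
        exact Set.disjoint_of_subset (Ioo_subset_cyl hβ w₁ ((hF w₁).mp h₁).2)
          (Ioo_subset_cyl hβ w₂ ((hF w₂).mp h₂).2)
          (cyl_disjoint (β := β) (hl₁.trans hl₂.symm) hne)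
      have hmeas := measure_biUnion_finset (μ := volume) hdisj
          (fun w _ => measurableSet_Ioo (a := sInf (cyl β w)) (b := sSup (cyl β w)))
      have hsub : (⋃ w ∈ F, Set.Ioo (sInf (cyl β w)) (sSup (cyl β w))) ⊆ Set.Icc (0:ℝ) 1 := by
        intro x hx
        rw [Set.mem_iUnion₂] at hx
        obtain ⟨w, hwF, hx⟩ := hx
        have := Ioo_subset_cyl hβ w ((hF w).mp hwF).2 hx
        have := cyl_subset_Ico β w this
        exact ⟨this.1, this.2.le⟩
      have hle : (volume (⋃ w ∈ F, Set.Ioo (sInf (cyl β w)) (sSup (cyl β w)))) ≤ 1 := by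
        calc volume _ ≤ volume (Set.Icc (0:ℝ) 1) := measure_mono hsub
          _ = 1 := by simp
      rw [hmeas] at hle
      have : ∑ w ∈ F, ENNReal.ofReal (sSup (cyl β w) - sInf (cyl β w)) ≤ 1 := by
        refine le_trans (le_of_eq ?_) hle
        refine Finset.sum_congr rfl fun w _ => ?_
        rw [Real.volume_Ioo]
      rw [← ENNReal.ofReal_sum_of_nonneg
        (fun w hw => diam_nonneg w ((hF w).mp hw).2)] at this
      exact ENNReal.ofReal_le_one.mp this
    -- card bound
    have hGcard : (G.card : ℝ) ≤ β ^ (n+1) * 1 + F.card := by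
      have h1 : G.card ≤ ∑ w ∈ F, ((Finset.Icc (0:ℤ) ⌊L w⌋).image fun d => w ++ [d]).card :=
        le_trans (Finset.card_le_card (Finset.filter_subset _ _)) (Finset.card_biUnion_le)
      have h2 : (G.card : ℝ) ≤ ∑ w ∈ F, (((Finset.Icc (0:ℤ) ⌊L w⌋).card : ℝ)) := by
        calc (G.card : ℝ) ≤ (∑ w ∈ F, ((Finset.Icc (0:ℤ) ⌊L w⌋).image fun d => w ++ [d]).card : ℕ) := by
              exact_mod_cast h1
          _ = ∑ w ∈ F, ((((Finset.Icc (0:ℤ) ⌊L w⌋).image fun d => w ++ [d]).card : ℕ) : ℝ) := by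
              push_cast; ring
          _ ≤ ∑ w ∈ F, (((Finset.Icc (0:ℤ) ⌊L w⌋).card : ℝ)) := by
              refine Finset.sum_le_sum fun w _ => ?_
              exact_mod_cast Finset.card_image_le
      have h3 : ∀ w ∈ F, ((Finset.Icc (0:ℤ) ⌊L w⌋).card : ℝ) ≤ L w + 1 := by
        intro w hwF
        have hL0 : 0 ≤ L w := by
          rw [hL]
          exact mul_nonneg (by positivity) (diam_nonneg w ((hF w).mp hwF).2)
        have hfl0 : (0:ℤ) ≤ ⌊L w⌋ := Int.floor_nonneg.mpr hL0
        rw [Int.card_Icc]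
        rw [show (⌊L w⌋ + 1 - 0 : ℤ) = ⌊L w⌋ + 1 by ring]
        have hcast : (((⌊L w⌋ + 1).toNat : ℕ) : ℝ) = (⌊L w⌋ : ℝ) + 1 := by
          have h := Int.toNat_of_nonneg (show (0:ℤ) ≤ ⌊L w⌋ + 1 by linarith)
          exact_mod_cast congrArg (Int.cast : ℤ → ℝ) h
        rw [hcast]
        have := Int.floor_le (L w)
        linarith
      calc (G.card : ℝ) ≤ ∑ w ∈ F, (((Finset.Icc (0:ℤ) ⌊L w⌋).card : ℝ)) := h2
        _ ≤ ∑ w ∈ F, (L w + 1) := Finset.sum_le_sum h3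
        _ = β ^ (n+1) * (∑ w ∈ F, (sSup (cyl β w) - sInf (cyl β w))) + F.card := by
            rw [Finset.sum_add_distrib, ← Finset.mul_sum]
            simp [hL]
        _ ≤ β ^ (n+1) * 1 + F.card := by
            have : β ^ (n+1) * (∑ w ∈ F, (sSup (cyl β w) - sInf (cyl β w))) ≤ β ^ (n+1) * 1 :=
              mul_le_mul_of_nonneg_left hsum (by positivity)
            linarith
    refine ⟨G, hGmem, ?_⟩
    calc (G.card : ℝ) ≤ β ^ (n+1) * 1 + F.card := hGcard
      _ ≤ β ^ (n+1) + (β ^ (n+1) - 1) / (β - 1) := by linarith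
      _ = (β ^ (n+2) - 1) / (β - 1) := by field_simp; ring

lemma meas_bound {β : ℝ} (hβ : 1 < β) (r : ℝ) (n : ℕ) (hn : 1 ≤ n) :
    volume {x | x ∈ Set.Ico (0:ℝ) 1 ∧ |(Tbeta β)^[n] x - x| < β ^ (-(r * (n:ℝ)))} ≤
      ENNReal.ofReal ((2 * β ^ 2 / (β - 1) ^ 2) * (β ^ (-r)) ^ n) := by
  classical
  have hβ0 : (0:ℝ) < β := by linarith
  have hβ1 : (0:ℝ) < β - 1 := by linarith
  set ε : ℝ := β ^ (-(r * (n:ℝ))) with hε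
  have hε0 : 0 < ε := Real.rpow_pos_of_pos hβ0 _
  set p : ℝ := β ^ n with hp
  have hpβ : β ≤ p := by
    rw [hp]
    exact le_self_pow₀ (by linarith) (by omega)
  have hp1 : (0:ℝ) < p - 1 := by linarith
  obtain ⟨F, hF, hFcard⟩ := counting hβ n
  -- covering
  have hcover : {x | x ∈ Set.Ico (0:ℝ) 1 ∧ |(Tbeta β)^[n] x - x| < ε} ⊆
      ⋃ w ∈ F, Metric.closedBall (cylc β w / (p - 1)) (ε / (p - 1)) := by
    rintro x ⟨hx, hlt⟩
    have hw : x ∈ cyl β (word β n x) := mem_cyl_word hx n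
    have hwlen : (word β n x).length = n := word_length β n x
    have hwF : word β n x ∈ F := (hF _).mpr ⟨hwlen, ⟨x, hw⟩⟩
    have he := iterate_eq_of_mem_cyl (word β n x) hw
    rw [hwlen] at he
    rw [Set.mem_iUnion₂]
    refine ⟨word β n x, hwF, ?_⟩
    rw [Metric.mem_closedBall, Real.dist_eq]
    set c := cylc β (word β n x) with hc
    have hxe : x - c / (p - 1) = ((p - 1) * x - c) / (p - 1) := by field_simp
    rw [hxe, abs_div, abs_of_pos hp1, div_le_div_iff_of_pos_right hp1]
    have : (Tbeta β)^[n] x - x = (p - 1) * x - c := by rw [he, hp]; ring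
    rw [this] at hlt
    exact hlt.le
  have hball : ∀ w : List ℤ, volume (Metric.closedBall (cylc β w / (p - 1)) (ε / (p - 1)))
      = ENNReal.ofReal (2 * (ε / (p - 1))) := fun w => Real.volume_closedBall _ _
  calc volume {x | x ∈ Set.Ico (0:ℝ) 1 ∧ |(Tbeta β)^[n] x - x| < ε}
      ≤ volume (⋃ w ∈ F, Metric.closedBall (cylc β w / (p - 1)) (ε / (p - 1))) :=
        measure_mono hcover
    _ ≤ ∑ w ∈ F, volume (Metric.closedBall (cylc β w / (p - 1)) (ε / (p - 1))) :=
        measure_biUnion_finset_le F _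
    _ = F.card * ENNReal.ofReal (2 * (ε / (p - 1))) := by
        rw [Finset.sum_congr rfl fun w _ => hball w, Finset.sum_const, nsmul_eq_mul]
    _ ≤ ENNReal.ofReal ((β ^ (n+1) - 1) / (β - 1)) * ENNReal.ofReal (2 * (ε / (p - 1))) := by
        apply mul_le_mul_left
        rw [← ENNReal.ofReal_natCast]
        exact ENNReal.ofReal_le_ofReal hFcard
    _ = ENNReal.ofReal (((β ^ (n+1) - 1) / (β - 1)) * (2 * (ε / (p - 1)))) := by
        have hA : (0:ℝ) ≤ (β ^ (n+1) - 1) / (β - 1) := by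
          apply div_nonneg _ hβ1.le
          have : (1:ℝ) ≤ β ^ (n+1) := one_le_pow₀ hβ.le
          linarith
        rw [ENNReal.ofReal_mul hA]
    _ ≤ ENNReal.ofReal ((2 * β ^ 2 / (β - 1) ^ 2) * (β ^ (-r)) ^ n) := by
        apply ENNReal.ofReal_le_ofReal
        have hεeq : ε = (β ^ (-r)) ^ n := by
          rw [hε, ← Real.rpow_natCast (β ^ (-r)) n, ← Real.rpow_mul hβ0.le]
          congr 1
          ring
        have hkey : ((β ^ (n+1) - 1) / (β - 1)) * (2 / (p - 1)) ≤ 2 * β ^ 2 / (β - 1) ^ 2 := by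
          have hpow : β ^ (n+1) = β * p := by rw [hp, pow_succ]; ring
          rw [hpow, div_mul_div_comm, div_le_div_iff₀ (by positivity) (by positivity)]
          have hββp : β * β ≤ β * p := mul_le_mul_of_nonneg_left hpβ hβ0.le
          nlinarith [hββp, hβ1, hp1, mul_pos hβ1 hp1]
        calc ((β ^ (n+1) - 1) / (β - 1)) * (2 * (ε / (p - 1)))
            = (((β ^ (n+1) - 1) / (β - 1)) * (2 / (p - 1))) * ε := by ring
          _ ≤ (2 * β ^ 2 / (β - 1) ^ 2) * ε :=
              mul_le_mul_of_nonneg_right hkey hε0.le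
          _ = (2 * β ^ 2 / (β - 1) ^ 2) * (β ^ (-r)) ^ n := by rw [hεeq]

end BetaAux

open BetaAux

theorem rBeta_zero_ae (β : ℝ) (hβ : 1 < β) :
    volume {x ∈ Set.Ico (0 : ℝ) 1 | rBeta β x ≠ 0} = 0 := by
  classical
  have hβ0 : (0:ℝ) < β := lt_trans one_pos hβ
  set S : ℚ → ℕ → Set ℝ := fun q n =>
    {x | x ∈ Set.Ico (0:ℝ) 1 ∧ |(Tbeta β)^[n] x - x| < β ^ (-((q:ℝ) * (n:ℝ)))} with hS
  have hlimsup : ∀ q : ℚ, 0 < q → volume (limsup (S q) atTop) = 0 := by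
    intro q hq
    apply measure_limsup_atTop_eq_zero
    set C : ℝ := max (2 * β ^ 2 / (β - 1) ^ 2) 1 with hC
    set ρ : ℝ≥0∞ := ENNReal.ofReal (β ^ (-(q:ℝ))) with hρ
    have hρ1 : ρ < 1 := by
      rw [hρ, ← ENNReal.ofReal_one]
      apply (ENNReal.ofReal_lt_ofReal_iff one_pos).mpr
      exact Real.rpow_lt_one_of_one_lt_of_neg hβ (by exact_mod_cast neg_neg_iff_pos.mpr (by exact_mod_cast hq))
    have hbound : ∀ n, volume (S q n) ≤ ENNReal.ofReal C * ρ ^ n := by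
      intro n
      match n with
      | 0 =>
        have h1 : volume (S q 0) ≤ 1 := by
          calc volume (S q 0) ≤ volume (Set.Ico (0:ℝ) 1) := measure_mono fun x hx => hx.1
            _ = 1 := by simp
        calc volume (S q 0) ≤ 1 := h1
          _ ≤ ENNReal.ofReal C * ρ ^ 0 := by
              rw [pow_zero, mul_one, ← ENNReal.ofReal_one]
              exact ENNReal.ofReal_le_ofReal (le_max_right _ _)
      | (m+1) =>
        have hb := meas_bound hβ (q:ℝ) (m+1) (by omega)
        refine le_trans hb ?_
        rw [ENNReal.ofReal_mul (by positivity), ENNReal.ofReal_pow (by positivity)]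
        exact mul_le_mul_left (ENNReal.ofReal_le_ofReal (le_max_left _ _)) _
    refine ne_top_of_le_ne_top ?_ (ENNReal.tsum_le_tsum hbound)
    rw [ENNReal.tsum_mul_left, ENNReal.tsum_geometric]
    exact ENNReal.mul_ne_top ENNReal.ofReal_ne_top
      (ENNReal.inv_ne_top.mpr (by simp [tsub_eq_zero_iff_le, hρ1.not_ge]))
  have hincl : {x ∈ Set.Ico (0 : ℝ) 1 | rBeta β x ≠ 0} ⊆
      ⋃ q : ℚ, ⋃ (_ : 0 < q), limsup (S q) atTop := by
    rintro x ⟨hx, hne⟩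
    have hex : ∃ r ∈ {r : ℝ | 0 ≤ r ∧
        ∃ᶠ n : ℕ in atTop, |(Tbeta β)^[n] x - x| < β ^ (-(r * (n : ℝ)))},
        ENNReal.ofReal r ≠ 0 := by
      by_contra hcon
      push_neg at hcon
      apply hne
      exact le_antisymm (iSup₂_le fun r hr => (hcon r hr).le) (zero_le)
    obtain ⟨r, ⟨hr0, hfreq⟩, hrne⟩ := hex
    have hr : 0 < r := lt_of_le_of_ne hr0 (fun h => hrne (by rw [← h]; simp))
    obtain ⟨q, hq0, hqr⟩ := exists_rat_btwn hr
    have hq0' : 0 < q := by exact_mod_cast hq0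
    rw [Set.mem_iUnion]
    refine ⟨q, ?_⟩
    rw [Set.mem_iUnion]
    refine ⟨hq0', ?_⟩
    rw [mem_limsup_iff_frequently_mem]
    apply hfreq.mono
    intro n hn
    refine ⟨hx, lt_of_lt_of_le hn ?_⟩
    apply Real.rpow_le_rpow_of_exponent_le hβ.le
    have : (q:ℝ) * n ≤ r * n := mul_le_mul_of_nonneg_right hqr.le (Nat.cast_nonneg n)
    linarith
  exact measure_mono_null hincl
    (measure_iUnion_null fun q => measure_iUnion_null fun hq => hlimsup q hq)
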